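/- For α > 1 and β satisfying 0 < β ≤ α̃ = α/(2α-1), one has B(β) ≤ B(α), where B is extended by continuity with B(1) = eπ and B(1/2) = 2π. -/

import Mathlib

/-- The bound `B(α) = π · α^(1/(2(α-1))) · α̃^(1/(2(α̃-1)))` with `α̃ = α/(2α-1)`,
extended by continuity by `B(1) = eπ` and `B(α) = 2π` for `α ≤ 1/2`. -/
noncomputable def Bext (α : ℝ) : ℝ :=
  if α ≤ 1/2 then 2 * Real.pi
  else if α = 1 then Real.exp 1 * Real.pi
  else Real.pi * α ^ (1/(2*(α-1))) * (α / (2*α - 1)) ^ (1/(2*(α / (2*α - 1) - 1)))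

noncomputable def Faux (x : ℝ) : ℝ :=
  -Real.log x + (2*x-1)*Real.log (2*x-1)/(2*(x-1))

/-- `log x ≥ 2(x-1)/(x+1)` for `x ≥ 1`. -/
lemma log_ge_aux {x : ℝ} (hx : 1 ≤ x) : 2*(x-1)/(x+1) ≤ Real.log x := by
  set φ : ℝ → ℝ := fun y => Real.log y - 2*(y-1)/(y+1) with hφ
  have hder : ∀ y : ℝ, 0 < y → HasDerivAt φ (1/y - 4/(y+1)^2) y := by
    intro y hy
    have h1 : HasDerivAt (fun z : ℝ => 2*(z-1)) 2 y := by
      simpa using ((hasDerivAt_id y).sub_const 1).const_mul 2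
    have h2 : HasDerivAt (fun z : ℝ => z+1) 1 y := by
      simpa using (hasDerivAt_id y).add_const 1
    have hne : y + 1 ≠ 0 := by linarith
    have h3 := h1.div h2 hne
    have h4 := (Real.hasDerivAt_log (ne_of_gt hy)).sub h3
    refine h4.congr_deriv ?_
    rw [one_div]
    congr 1
    field_simp
    ring
  have hmono : MonotoneOn φ (Set.Icc 1 x) := by
    apply monotoneOn_of_deriv_nonneg (convex_Icc 1 x)
    · intro y hy
      exact (hder y (by linarith [hy.1])).continuousAt.continuousWithinAt
    · intro y hy
      rw [interior_Icc] at hy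
      exact (hder y (by linarith [hy.1])).differentiableAt.differentiableWithinAt
    · intro y hy
      rw [interior_Icc] at hy
      rw [(hder y (by linarith [hy.1])).deriv]
      have hy1 : (1:ℝ) < y := hy.1
      have h5 : (4:ℝ)/(y+1)^2 ≤ 1/y := by
        rw [div_le_div_iff₀ (by positivity) (by linarith)]
        nlinarith
      linarith
  have h0 : φ 1 = 0 := by simp [hφ]
  have := hmono (Set.left_mem_Icc.mpr hx) (Set.right_mem_Icc.mpr hx) hx
  rw [h0] at this
  simp only [hφ] at this
  linarith

/-- `g(x) = (2x-1)log(2x-1) - 2(x-1)log(2x) ≥ 0` for `x ≥ 1`. -/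
lemma g_nonneg {x : ℝ} (hx : 1 ≤ x) :
    0 ≤ (2*x-1)*Real.log (2*x-1) - 2*(x-1)*Real.log (2*x) := by
  set g : ℝ → ℝ := fun y => (2*y-1)*Real.log (2*y-1) - 2*(y-1)*Real.log (2*y) with hg
  have hder : ∀ y : ℝ, 1/2 < y → HasDerivAt g
      (2*Real.log (2*y-1) + (2*y-1)*(2/(2*y-1))
        - (2*Real.log (2*y) + 2*(y-1)*(2/(2*y)))) y := by
    intro y hy
    have h1 : HasDerivAt (fun z : ℝ => 2*z-1) 2 y := by
      simpa using ((hasDerivAt_id y).const_mul 2).sub_const 1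
    have h2 : HasDerivAt (fun z : ℝ => Real.log (2*z-1)) (2/(2*y-1)) y :=
      h1.log (by linarith)
    have h3 := h1.mul h2
    have h4 : HasDerivAt (fun z : ℝ => 2*(z-1)) 2 y := by
      simpa using ((hasDerivAt_id y).sub_const 1).const_mul 2
    have h5 : HasDerivAt (fun z : ℝ => (2:ℝ)*z) 2 y := by
      simpa using (hasDerivAt_id y).const_mul 2
    have h6 : HasDerivAt (fun z : ℝ => Real.log (2*z)) (2/(2*y)) y :=
      h5.log (by positivity)
    have h7 := h4.mul h6
    have h8 := h3.sub h7
    refine h8.congr_deriv ?_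
    ring
  have hmono : MonotoneOn g (Set.Icc 1 x) := by
    apply monotoneOn_of_deriv_nonneg (convex_Icc 1 x)
    · intro y hy
      exact (hder y (by linarith [hy.1])).continuousAt.continuousWithinAt
    · intro y hy
      rw [interior_Icc] at hy
      exact (hder y (by linarith [hy.1])).differentiableAt.differentiableWithinAt
    · intro y hy
      rw [interior_Icc] at hy
      have hy1 : (1:ℝ) < y := hy.1
      rw [(hder y (by linarith)).deriv]
      have hy0 : (0:ℝ) < y := by linarith
      have h2y : (0:ℝ) < 2*y - 1 := by linarith
      -- log(2y) ≤ log(2y-1) + 1/y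
      have hlog : Real.log (2*y) ≤ Real.log (2*y-1) + 1/y := by
        have h1 : Real.log (2*y) - Real.log (2*y-1) = Real.log ((2*y)/(2*y-1)) := by
          rw [Real.log_div (by positivity) (ne_of_gt h2y)]
        have h2 : Real.log ((2*y)/(2*y-1)) ≤ (2*y)/(2*y-1) - 1 :=
          Real.log_le_sub_one_of_pos (by positivity)
        have h3 : (2*y)/(2*y-1) - 1 = 1/(2*y-1) := by field_simp; ring
        have h4 : 1/(2*y-1) ≤ 1/y := by
          apply one_div_le_one_div_of_le hy0; linarith
        linarith
      have e1 : (2*y-1)*(2/(2*y-1)) = 2 := by field_simp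
      have e2 : 2*(y-1)*(2/(2*y)) = 2 - 2/y := by field_simp
      rw [e1, e2]
      have e3 : 2/y = 2*(1/y) := by ring
      linarith
  have h0 : g 1 = 0 := by norm_num [hg]
  have := hmono (Set.left_mem_Icc.mpr hx) (Set.right_mem_Icc.mpr hx) hx
  rw [h0] at this
  simpa [hg] using this

lemma Faux_anti {a b : ℝ} (ha : 1 < a) (hab : a ≤ b) : Faux b ≤ Faux a := by
  have hder : ∀ y : ℝ, 1 < y → HasDerivAt Faux
      (-(1/y) + ((2*Real.log (2*y-1) + (2*y-1)*(2/(2*y-1)))*(2*(y-1))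
        - (2*y-1)*Real.log (2*y-1)*2)/(2*(y-1))^2) y := by
    intro y hy
    have h1 : HasDerivAt (fun z : ℝ => 2*z-1) 2 y := by
      simpa using ((hasDerivAt_id y).const_mul 2).sub_const 1
    have h2 : HasDerivAt (fun z : ℝ => Real.log (2*z-1)) (2/(2*y-1)) y :=
      h1.log (by linarith)
    have h3 := h1.mul h2
    have h4 : HasDerivAt (fun z : ℝ => 2*(z-1)) 2 y := by
      simpa using ((hasDerivAt_id y).sub_const 1).const_mul 2
    have h5 := h3.div h4 (by intro h; nlinarith)
    have h6 := ((Real.hasDerivAt_log (by positivity)).neg).add h5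
    refine h6.congr_deriv ?_
    simp only [Pi.mul_apply]
    ring
  have hanti : AntitoneOn Faux (Set.Icc a b) := by
    apply antitoneOn_of_deriv_nonpos (convex_Icc a b)
    · intro y hy
      exact (hder y (by linarith [hy.1])).continuousAt.continuousWithinAt
    · intro y hy
      rw [interior_Icc] at hy
      exact (hder y (by linarith [hy.1])).differentiableAt.differentiableWithinAt
    · intro y hy
      rw [interior_Icc] at hy
      have hy1 : (1:ℝ) < y := lt_trans ha hy.1
      rw [(hder y hy1).deriv]
      have hy0 : (0:ℝ) < y := by linarith
      have h2y : (1:ℝ) ≤ 2*y - 1 := by linarith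
      have hL := log_ge_aux h2y
      have hL' : 2*(y-1) ≤ y * Real.log (2*y-1) := by
        have : 2*((2*y-1)-1)/((2*y-1)+1) = 2*(y-1)/y := by
          rw [div_eq_div_iff (by linarith) (by linarith)]; ring
        rw [this] at hL
        nlinarith [(div_le_iff₀ hy0).mp hL]
      set L := Real.log (2*y-1)
      have hD : (0:ℝ) < (2*(y-1))^2 := pow_pos (by linarith) 2
      have hnum : ((2*L + (2*y-1)*(2/(2*y-1)))*(2*(y-1)) - (2*y-1)*L*2)/(2*(y-1))^2
          ≤ 1/y := by
        rw [div_le_div_iff₀ hD hy0]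
        have e1 : (2*y-1)*(2/(2*y-1)) = 2 := by
          field_simp
        rw [e1]
        nlinarith
      linarith
  have := hanti (Set.left_mem_Icc.mpr hab) (Set.right_mem_Icc.mpr hab) hab
  exact this

lemma BextEq {a : ℝ} (ha : 1/2 < a) (ha1 : a ≠ 1) :
    Bext a = Real.pi * Real.exp (Faux a) := by
  have h2a : (0:ℝ) < 2*a - 1 := by linarith
  have ha0 : (0:ℝ) < a := by linarith
  have ht0 : (0:ℝ) < a/(2*a-1) := by positivity
  rw [Bext, if_neg (by linarith), if_neg ha1,
    Real.rpow_def_of_pos ha0, Real.rpow_def_of_pos ht0, mul_assoc, ← Real.exp_add]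
  congr 2
  rw [Real.log_div (ne_of_gt ha0) (ne_of_gt h2a)]
  have h1 : a - 1 ≠ 0 := sub_ne_zero.mpr ha1
  have h3 : a/(2*a-1) - 1 = (1-a)/(2*a-1) := by rw [div_sub_one h2a.ne']; ring
  rw [Faux, h3]
  have h4 : (1:ℝ) - a ≠ 0 := by intro h; apply ha1; linarith
  field_simp
  ring

lemma Faux_symm {b : ℝ} (hb : 1/2 < b) (hb1 : b < 1) :
    Faux b = Faux (b/(2*b-1)) := by
  have h2b : (0:ℝ) < 2*b - 1 := by linarith
  have hb0 : (0:ℝ) < b := by linarith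
  have e1 : 2*(b/(2*b-1)) - 1 = (2*b-1)⁻¹ := by field_simp; ring
  rw [Faux, Faux, e1, Real.log_inv,
    Real.log_div (ne_of_gt hb0) (ne_of_gt h2b)]
  have h1 : b - 1 ≠ 0 := by intro h; nlinarith
  have h2 : b/(2*b-1) - 1 = (1-b)/(2*b-1) := by rw [div_sub_one h2b.ne']; ring
  rw [h2]
  have h4 : (1:ℝ) - b ≠ 0 := by intro h; nlinarith
  field_simp
  ring

/-- For `α > 1` and `0 < β ≤ α̃ = α/(2α-1)`, one has `B(β) ≤ B(α)`. -/
theorem Bext_le_of_le_tilde (α β : ℝ) (hα : 1 < α) (hβ0 : 0 < β)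
    (hβ : β ≤ α / (2*α - 1)) :
    Bext β ≤ Bext α := by
  have h2α : (0:ℝ) < 2*α - 1 := by linarith
  have ht1 : α/(2*α-1) < 1 := by rw [div_lt_one h2α]; linarith
  have hβ1 : β < 1 := lt_of_le_of_lt hβ ht1
  have hβ' : β * (2*α - 1) ≤ α := by
    calc β * (2*α-1) ≤ (α/(2*α-1)) * (2*α-1) := by
          apply mul_le_mul_of_nonneg_right hβ (le_of_lt h2α)
      _ = α := div_mul_cancel₀ _ h2α.ne'
  rw [BextEq (by linarith : 1/2 < α) (by linarith : α ≠ 1)]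
  by_cases hc : β ≤ 1/2
  · rw [Bext, if_pos hc]
    have hg := g_nonneg (le_of_lt hα)
    have hα1 : (0:ℝ) < α - 1 := by linarith
    have hlog2 : Real.log (2*α) = Real.log 2 + Real.log α := by
      rw [Real.log_mul (by norm_num) (by positivity)]
    have key : Real.log 2 ≤ Faux α := by
      have h : Faux α - Real.log 2 =
          ((2*α-1)*Real.log (2*α-1) - 2*(α-1)*Real.log (2*α)) / (2*(α-1)) := by
        rw [Faux, hlog2]
        field_simp
        ring
      have : 0 ≤ Faux α - Real.log 2 := by
        rw [h]; exact div_nonneg hg (by linarith)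
      linarith
    have : (2:ℝ) ≤ Real.exp (Faux α) := by
      calc (2:ℝ) = Real.exp (Real.log 2) := (Real.exp_log (by norm_num)).symm
        _ ≤ Real.exp (Faux α) := Real.exp_le_exp.mpr key
    nlinarith [Real.pi_pos]
  · push_neg at hc
    have h2β : (0:ℝ) < 2*β - 1 := by linarith
    rw [BextEq hc (ne_of_lt hβ1), Faux_symm hc hβ1]
    have hab : α ≤ β/(2*β-1) := by
      rw [le_div_iff₀ h2β]
      nlinarith
    have := Faux_anti hα hab
    have hexp := Real.exp_le_exp.mpr this
    nlinarith [Real.pi_pos, Real.exp_pos (Faux (β/(2*β-1))), Real.exp_pos (Faux α)]
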